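/- (The α-Lemma.) Let w be a weight on ℝ with w^{-1} also a weight, and suppose [w]_{A_2} := sup_{I∈D} ⟨w⟩_I ⟨w^{-1}⟩_I < ∞. For α > 0 define, for I ∈ D, μ_I := ⟨w⟩_I^α ⟨w^{-1}⟩_I^α |I| ( |Δ_I w|²/⟨w⟩_I² + |Δ_I w^{-1}|²/⟨w^{-1}⟩_I² ). Then there is a constant C_α depending only on α (for 0 < α < 1/2 one may take C_α = 72/(α − 2α²), and in general C_α = max{72/(α−2α²), 576} interpreted as 576 when α ≥ 1/2) such that {μ_I}_{I∈D} is a Carleson sequence with intensity at most C_α [w]_{A_2}^α, i.e., ∑_{I∈D(J)} μ_I ≤ C_α [w]_{A_2}^α |J| for all J ∈ D. -/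

import Mathlib

open MeasureTheory ENNReal

noncomputable section

/-- Average of `f` over a set `I ⊆ ℝ` with respect to Lebesgue measure. -/
def iAvg (I : Set ℝ) (f : ℝ → ℝ) : ℝ :=
  (volume I).toReal⁻¹ * ∫ x in I, f x

/-- A weight on `ℝ`: locally integrable and a.e. positive. -/
def IsWeight1 (w : ℝ → ℝ) : Prop :=
  MeasureTheory.LocallyIntegrable w volume ∧ ∀ᵐ x : ℝ, 0 < w x

/-- The standard dyadic interval `[k 2^{-j}, (k+1) 2^{-j})`. -/
def dyadInt (j k : ℤ) : Set ℝ :=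
  Set.Ico ((k : ℝ) * (2:ℝ) ^ (-j)) (((k : ℝ) + 1) * (2:ℝ) ^ (-j))

/-- `Δ_I g = ⟨g⟩_{I_r} - ⟨g⟩_{I_l}` for the dyadic interval `I` of parameters `(j,k)`. -/
def deltaD (j k : ℤ) (g : ℝ → ℝ) : ℝ :=
  iAvg (dyadInt (j + 1) (2 * k + 1)) g - iAvg (dyadInt (j + 1) (2 * k)) g

/-- The dyadic `A₂` characteristic `[w]_{A₂} = sup_{I ∈ D} ⟨w⟩_I ⟨w⁻¹⟩_I`. -/
def dA2Const (w : ℝ → ℝ) : ℝ≥0∞ :=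
  ⨆ p : ℤ × ℤ, ENNReal.ofReal
    (iAvg (dyadInt p.1 p.2) w * iAvg (dyadInt p.1 p.2) (fun x => (w x)⁻¹))

/-- The sequence `μ_I` of the α-Lemma. -/
def muSeq (w : ℝ → ℝ) (α : ℝ) (j k : ℤ) : ℝ :=
  (iAvg (dyadInt j k) w) ^ α * (iAvg (dyadInt j k) (fun x => (w x)⁻¹)) ^ α *
    (volume (dyadInt j k)).toReal *
    ((deltaD j k w) ^ 2 / (iAvg (dyadInt j k) w) ^ 2 +
      (deltaD j k (fun x => (w x)⁻¹)) ^ 2 / (iAvg (dyadInt j k) (fun x => (w x)⁻¹)) ^ 2)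

/-! ### Elementary real inequalities (the Bellman-function estimates) -/

/-- Quantitative AM-GM: `t^β ≤ 1 + β(t-1) - (β/16)(t-1)²` for `0 < β ≤ 1/2`, `0 ≤ t ≤ 9`. -/
lemma lemA {β t : ℝ} (hβ0 : 0 < β) (hβ : β ≤ 1/2) (ht0 : 0 ≤ t) (ht9 : t ≤ 9) :
    t ^ β ≤ 1 + β*(t-1) - (β/16)*(t-1)^2 := by
  set s := Real.sqrt t with hs
  have hs0 : 0 ≤ s := Real.sqrt_nonneg t
  have hst : t = s^2 := (Real.sq_sqrt ht0).symm
  have hs3 : s ≤ 3 := by nlinarith [hst]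
  have hgm : t ^ β ≤ (2*β) * s + (1 - 2*β) := by
    have h1 : t ^ β = s ^ (2*β) * 1 ^ (1 - 2*β) := by
      rw [Real.one_rpow, mul_one, hs, Real.sqrt_eq_rpow, ← Real.rpow_mul ht0,
        show (1/2:ℝ)*(2*β) = β by ring]
    calc t ^ β = s ^ (2*β) * 1 ^ (1 - 2*β) := h1
      _ ≤ (2*β) * s + (1-2*β) * 1 :=
        Real.geom_mean_le_arith_mean2_weighted (by linarith) (by linarith) hs0
          zero_le_one (by ring)
      _ = (2*β) * s + (1 - 2*β) := by ring
  have key : 0 ≤ β * (s-1)^2 * (16 - (s+1)^2) :=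
    mul_nonneg (mul_nonneg hβ0.le (sq_nonneg _)) (by nlinarith)
  rw [hst] at hgm ⊢
  nlinarith [hgm, key]

private lemma sqrt_le_of_sq {s c : ℝ} (hs0 : 0 ≤ s) (hc : 0 ≤ c) (h : s^2 ≤ c^2) : s ≤ c := by
  nlinarith

private lemma step1 {s t d : ℝ} (h : (s+t)^2 ≤ 4 - d) (hd0 : 0 ≤ d) (hd4 : d ≤ 4)
    (h0 : 0 ≤ s + t) : s + t ≤ 2 - d/4 := by
  have : (s+t)^2 ≤ (2-d/4)^2 := by nlinarith [sq_nonneg d]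
  exact sqrt_le_of_sq h0 (by linarith) this

private lemma step2 {s t c : ℝ} (h4 : (s+t)^2 ≤ 4) (h : s^2 - t^2 = 2*c) : c^2 ≤ (s-t)^2 := by
  nlinarith [mul_nonneg (sq_nonneg (s-t)) (by linarith : 0 ≤ 4 - (s+t)^2)]

set_option maxHeartbeats 1000000 in
/-- The main two-variable Bellman inequality: for `0 < α ≤ 1/4` and `|x|,|y| ≤ 1`,
`((1+x)(1+y))^α + ((1-x)(1-y))^α ≤ 2 - (α/8)(x²+y²)`. -/
lemma lem2D {α x y : ℝ} (hα0 : 0 < α) (hα : α ≤ 1/4) (hx : |x| ≤ 1) (hy : |y| ≤ 1) :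
    ((1+x)*(1+y)) ^ α + ((1-x)*(1-y)) ^ α ≤ 2 - (α/8)*(x^2+y^2) := by
  obtain ⟨hx1, hx2⟩ := abs_le.1 hx
  obtain ⟨hy1, hy2⟩ := abs_le.1 hy
  set P := (1+x)*(1+y) with hPdef
  set Q := (1-x)*(1-y) with hQdef
  have hP0 : 0 ≤ P := mul_nonneg (by linarith) (by linarith)
  have hQ0 : 0 ≤ Q := mul_nonneg (by linarith) (by linarith)
  set s := Real.sqrt P with hsdef
  set t := Real.sqrt Q with htdef
  have hs0 : 0 ≤ s := Real.sqrt_nonneg P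
  have ht0 : 0 ≤ t := Real.sqrt_nonneg Q
  have hsP : s^2 = P := Real.sq_sqrt hP0
  have htQ : t^2 = Q := Real.sq_sqrt hQ0
  have hPs : P ^ α = s ^ (2*α) := by
    rw [← hsP, ← Real.rpow_natCast s 2, ← Real.rpow_mul hs0]
    norm_num
  have hQt : Q ^ α = t ^ (2*α) := by
    rw [← htQ, ← Real.rpow_natCast t 2, ← Real.rpow_mul ht0]
    norm_num
  have hsb : s ≤ 3 := sqrt_le_of_sq hs0 (by norm_num) (by rw [hsP]; nlinarith)
  have htb : t ≤ 3 := sqrt_le_of_sq ht0 (by norm_num) (by rw [htQ]; nlinarith)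
  have hA := lemA (by linarith : (0:ℝ) < 2*α) (by linarith) hs0 (by linarith)
  have hB := lemA (by linarith : (0:ℝ) < 2*α) (by linarith) ht0 (by linarith)
  -- bound on s*t via AM-GM on √(1-x²), √(1-y²)
  have h1x : (0:ℝ) ≤ 1 - x^2 := by nlinarith
  have h1y : (0:ℝ) ≤ 1 - y^2 := by nlinarith
  set a := Real.sqrt (1-x^2) with hadef
  set b := Real.sqrt (1-y^2) with hbdef
  have ha2 : a^2 = 1-x^2 := Real.sq_sqrt h1x
  have hb2 : b^2 = 1-y^2 := Real.sq_sqrt h1y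
  have hPQ : P * Q = (1-x^2)*(1-y^2) := by rw [hPdef, hQdef]; ring
  have hstab : s * t = a * b := by
    rw [hsdef, htdef, ← Real.sqrt_mul hP0, hPQ, hadef, hbdef, ← Real.sqrt_mul h1x]
  have hst : 2*(s*t) ≤ (1-x^2) + (1-y^2) := by
    rw [hstab]
    have := sq_nonneg (a-b)
    linarith [ha2, hb2, this, sq_nonneg (a-b)]
  have hA1 : (s+t)^2 ≤ 4 - (x-y)^2 := by
    have hexp : (s+t)^2 = s^2 + t^2 + 2*(s*t) := by ring
    have hPQsum : P + Q = 2 + 2*(x*y) := by rw [hPdef, hQdef]; ring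
    have hgoal : 4 - (x-y)^2 = (2 + 2*(x*y)) + ((1-x^2)+(1-y^2)) := by ring
    rw [hexp, hsP, htQ, hgoal, ← hPQsum]
    linarith [hst]
  have hA1' : s + t ≤ 2 - (x-y)^2/4 :=
    step1 hA1 (sq_nonneg _) (by nlinarith) (by linarith)
  have hA2 : (x+y)^2 ≤ (s-t)^2 := by
    refine step2 (by linarith [sq_nonneg (x-y)]) ?_
    rw [hsP, htQ, hPdef, hQdef]; ring
  -- combine
  rw [hPs, hQt]
  have e1 : 2*α*(s+t-2) ≤ -(α/2)*((x-y)^2) := by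
    have := mul_le_mul_of_nonneg_left (show s+t-2 ≤ -(x-y)^2/4 by linarith)
      (show (0:ℝ) ≤ 2*α by linarith)
    linarith [this]
  have e2 : (α/16)*(x+y)^2 ≤ (α/8)*((s-1)^2+(t-1)^2) := by
    have h3 : (x+y)^2/2 ≤ (s-1)^2 + (t-1)^2 := by linarith [sq_nonneg (s+t-2), hA2]
    have := mul_le_mul_of_nonneg_left h3 (show (0:ℝ) ≤ α/8 by linarith)
    linarith [this]
  have e3 : 0 ≤ α*(x-y)^2 := mul_nonneg hα0.le (sq_nonneg _)
  have hAB : s ^ (2*α) + t ^ (2*α) ≤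
      2 + 2*α*(s+t-2) - (α/8)*((s-1)^2+(t-1)^2) := by
    linarith [hA, hB]
  linarith only [hAB, e1, e2, e3]

/-! ### Basic facts about dyadic intervals and averages -/

lemma two_zpow_pos (j : ℤ) : (0:ℝ) < (2:ℝ) ^ j := zpow_pos (by norm_num) j

lemma dyad_volume (j k : ℤ) : volume (dyadInt j k) = ENNReal.ofReal ((2:ℝ) ^ (-j)) := by
  rw [dyadInt, Real.volume_Ico]
  congr 1
  ring

lemma dyad_volume_toReal (j k : ℤ) : (volume (dyadInt j k)).toReal = (2:ℝ) ^ (-j) := by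
  rw [dyad_volume, ENNReal.toReal_ofReal (two_zpow_pos _).le]

lemma zpow_negsucc (j : ℤ) : (2:ℝ) ^ (-(j+1)) = (2:ℝ) ^ (-j) * (1/2) := by
  rw [show -(j+1) = -j + (-1) by ring, zpow_add₀ (by norm_num : (2:ℝ) ≠ 0)]
  norm_num

lemma dyad_split (j k : ℤ) :
    dyadInt j k = dyadInt (j+1) (2*k) ∪ dyadInt (j+1) (2*k+1) := by
  have hp := (two_zpow_pos (-j)).le
  unfold dyadInt
  push_cast
  rw [zpow_negsucc j]
  rw [show (2*(k:ℝ)) * ((2:ℝ)^(-j) * (1/2)) = (k:ℝ) * (2:ℝ)^(-j) by ring,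
      show (2*(k:ℝ)+1+1) * ((2:ℝ)^(-j) * (1/2)) = ((k:ℝ)+1) * (2:ℝ)^(-j) by ring]
  refine (Set.Ico_union_Ico_eq_Ico ?_ ?_).symm <;> nlinarith [two_zpow_pos (-j)]

lemma dyad_disjoint (j k : ℤ) :
    Disjoint (dyadInt (j+1) (2*k)) (dyadInt (j+1) (2*k+1)) := by
  unfold dyadInt
  push_cast
  exact Set.Ico_disjoint_Ico_same

lemma dyad_measurable (j k : ℤ) : MeasurableSet (dyadInt j k) := measurableSet_Ico

lemma weight_integrableOn (w : ℝ → ℝ) (hw : MeasureTheory.LocallyIntegrable w volume)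
    (j k : ℤ) : IntegrableOn w (dyadInt j k) volume := by
  refine (hw.integrableOn_isCompact (isCompact_Icc (a := (k:ℝ) * (2:ℝ)^(-j))
    (b := ((k:ℝ)+1) * (2:ℝ)^(-j)))).mono_set ?_
  exact Set.Ico_subset_Icc_self

lemma iAvg_split (w : ℝ → ℝ) (hw : MeasureTheory.LocallyIntegrable w volume) (j k : ℤ) :
    iAvg (dyadInt j k) w
      = (iAvg (dyadInt (j+1) (2*k)) w + iAvg (dyadInt (j+1) (2*k+1)) w) / 2 := by
  have hint : ∫ x in dyadInt j k, w x
      = (∫ x in dyadInt (j+1) (2*k), w x) + ∫ x in dyadInt (j+1) (2*k+1), w x := by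
    rw [dyad_split j k]
    exact setIntegral_union (dyad_disjoint j k) (dyad_measurable _ _)
      (weight_integrableOn w hw _ _) (weight_integrableOn w hw _ _)
  unfold iAvg
  rw [hint, dyad_volume_toReal, dyad_volume_toReal, dyad_volume_toReal, zpow_negsucc]
  have := (two_zpow_pos (-j)).ne'
  field_simp

lemma iAvg_pos (w : ℝ → ℝ) (hw : IsWeight1 w) (j k : ℤ) : 0 < iAvg (dyadInt j k) w := by
  obtain ⟨hli, hpos⟩ := hw
  have hvol : (0:ℝ) < (volume (dyadInt j k)).toReal := by
    rw [dyad_volume_toReal]; exact two_zpow_pos _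
  have hi : 0 < ∫ x in dyadInt j k, w x := by
    rw [setIntegral_pos_iff_support_of_nonneg_ae
      (ae_restrict_of_ae (hpos.mono fun x hx => hx.le)) (weight_integrableOn w hli j k)]
    have hnull : volume {x : ℝ | ¬ 0 < w x} = 0 := hpos
    have hsub : dyadInt j k ⊆ (Function.support w ∩ dyadInt j k) ∪ {x : ℝ | ¬ 0 < w x} := by
      intro x hx
      by_cases h : 0 < w x
      · exact Or.inl ⟨h.ne', hx⟩
      · exact Or.inr h
    have hge : volume (dyadInt j k)
        ≤ volume ((Function.support w ∩ dyadInt j k) ∪ {x : ℝ | ¬ 0 < w x}) :=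
      measure_mono hsub
    have hle := measure_union_le (μ := volume) (Function.support w ∩ dyadInt j k)
      {x : ℝ | ¬ 0 < w x}
    rw [hnull, add_zero] at hle
    have : volume (dyadInt j k) ≤ volume (Function.support w ∩ dyadInt j k) := le_trans hge hle
    have hv : 0 < volume (dyadInt j k) := by
      rw [dyad_volume]; exact ENNReal.ofReal_pos.mpr (two_zpow_pos _)
    exact lt_of_lt_of_le hv this
  exact mul_pos (inv_pos.mpr hvol) hi

/-! ### The Bellman step -/

/-- The Bellman function value `|I| ⟨w⟩_I^α ⟨w⁻¹⟩_I^α`. -/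
def bSeq (w : ℝ → ℝ) (α : ℝ) (j k : ℤ) : ℝ :=
  (volume (dyadInt j k)).toReal *
    ((iAvg (dyadInt j k) w) ^ α * (iAvg (dyadInt j k) (fun x => (w x)⁻¹)) ^ α)

lemma bSeq_nonneg (w : ℝ → ℝ) (hw : IsWeight1 w) (hw' : IsWeight1 (fun x => (w x)⁻¹))
    (α : ℝ) (j k : ℤ) : 0 ≤ bSeq w α j k := by
  have h1 := iAvg_pos w hw j k
  have h2 := iAvg_pos _ hw' j k
  unfold bSeq
  have := ENNReal.toReal_nonneg (a := volume (dyadInt j k))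
  positivity

lemma mu_nonneg (w : ℝ → ℝ) (hw : IsWeight1 w) (hw' : IsWeight1 (fun x => (w x)⁻¹))
    (α : ℝ) (j k : ℤ) : 0 ≤ muSeq w α j k := by
  have h1 := iAvg_pos w hw j k
  have h2 := iAvg_pos _ hw' j k
  unfold muSeq
  have := ENNReal.toReal_nonneg (a := volume (dyadInt j k))
  positivity

lemma bellman_step {α : ℝ} (hα0 : 0 < α) (hα : α ≤ 1/4) (w : ℝ → ℝ)
    (hw : IsWeight1 w) (hw' : IsWeight1 (fun x => (w x)⁻¹)) (j k : ℤ) :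
    (α/64) * muSeq w α j k + bSeq w α (j+1) (2*k) + bSeq w α (j+1) (2*k+1)
      ≤ bSeq w α j k := by
  set u := iAvg (dyadInt j k) w with hu_def
  set v := iAvg (dyadInt j k) (fun x => (w x)⁻¹) with hv_def
  set ul := iAvg (dyadInt (j+1) (2*k)) w with hul_def
  set ur := iAvg (dyadInt (j+1) (2*k+1)) w with hur_def
  set vl := iAvg (dyadInt (j+1) (2*k)) (fun x => (w x)⁻¹) with hvl_def
  set vr := iAvg (dyadInt (j+1) (2*k+1)) (fun x => (w x)⁻¹) with hvr_def
  have hu : 0 < u := iAvg_pos w hw j k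
  have hv : 0 < v := iAvg_pos _ hw' j k
  have hul : 0 < ul := iAvg_pos w hw _ _
  have hur : 0 < ur := iAvg_pos w hw _ _
  have hvl : 0 < vl := iAvg_pos _ hw' _ _
  have hvr : 0 < vr := iAvg_pos _ hw' _ _
  have havgu : u = (ul + ur)/2 := iAvg_split w hw.1 j k
  have havgv : v = (vl + vr)/2 := iAvg_split _ hw'.1 j k
  set x := (ur - ul)/(2*u) with hx_def
  set y := (vr - vl)/(2*v) with hy_def
  have h2u : (0:ℝ) < 2*u := by linarith
  have h2v : (0:ℝ) < 2*v := by linarith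
  have hx1 : |x| ≤ 1 := by
    rw [abs_le]
    constructor
    · rw [hx_def, le_div_iff₀ h2u]; nlinarith
    · rw [hx_def, div_le_one h2u]; nlinarith
  have hy1 : |y| ≤ 1 := by
    rw [abs_le]
    constructor
    · rw [hy_def, le_div_iff₀ h2v]; nlinarith
    · rw [hy_def, div_le_one h2v]; nlinarith
  have hurx : ur = u * (1+x) := by
    rw [hx_def, havgu]; field_simp; ring
  have hulx : ul = u * (1-x) := by
    rw [hx_def, havgu]; field_simp; ring
  have hvry : vr = v * (1+y) := by
    rw [hy_def, havgv]; field_simp; ring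
  have hvly : vl = v * (1-y) := by
    rw [hy_def, havgv]; field_simp; ring
  have hx1' : (0:ℝ) ≤ 1 + x := by have := (abs_le.1 hx1).1; linarith
  have hx2' : (0:ℝ) ≤ 1 - x := by have := (abs_le.1 hx1).2; linarith
  have hy1' : (0:ℝ) ≤ 1 + y := by have := (abs_le.1 hy1).1; linarith
  have hy2' : (0:ℝ) ≤ 1 - y := by have := (abs_le.1 hy1).2; linarith
  have hr : ur ^ α * vr ^ α = (u^α * v^α) * ((1+x)*(1+y))^α := by
    rw [hurx, hvry, Real.mul_rpow hu.le hx1', Real.mul_rpow hv.le hy1',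
      Real.mul_rpow hx1' hy1']
    ring
  have hl : ul ^ α * vl ^ α = (u^α * v^α) * ((1-x)*(1-y))^α := by
    rw [hulx, hvly, Real.mul_rpow hu.le hx2', Real.mul_rpow hv.le hy2',
      Real.mul_rpow hx2' hy2']
    ring
  have hdelw : deltaD j k w = 2*u*x := by
    show ur - ul = 2*u*x
    rw [hurx, hulx]; ring
  have hdelv : deltaD j k (fun x => (w x)⁻¹) = 2*v*y := by
    show vr - vl = 2*v*y
    rw [hvry, hvly]; ring
  set L := (volume (dyadInt j k)).toReal with hL_def
  have hL : 0 ≤ L := ENNReal.toReal_nonneg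
  have hmu : muSeq w α j k = u^α * v^α * L * (4*x^2 + 4*y^2) := by
    unfold muSeq
    rw [← hu_def, ← hv_def, ← hL_def, hdelw, hdelv]
    field_simp
    ring
  have hhalf : (volume (dyadInt (j+1) (2*k))).toReal = L/2 := by
    rw [dyad_volume_toReal, hL_def, dyad_volume_toReal, zpow_negsucc]; ring
  have hhalf' : (volume (dyadInt (j+1) (2*k+1))).toReal = L/2 := by
    rw [dyad_volume_toReal, hL_def, dyad_volume_toReal, zpow_negsucc]; ring
  have h2D := lem2D hα0 hα hx1 hy1
  have hfac : 0 ≤ L * (u^α * v^α) := by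
    have h1 : 0 < u ^ α := Real.rpow_pos_of_pos hu α
    have h2 : 0 < v ^ α := Real.rpow_pos_of_pos hv α
    positivity
  have hprod := mul_le_mul_of_nonneg_left h2D hfac
  show (α/64) * muSeq w α j k + bSeq w α (j+1) (2*k) + bSeq w α (j+1) (2*k+1)
      ≤ bSeq w α j k
  unfold bSeq
  rw [← hul_def, ← hur_def, ← hvl_def, ← hvr_def, ← hu_def, ← hv_def, ← hL_def,
    hhalf, hhalf', hmu, hr, hl]
  linarith only [hprod]

/-! ### The dyadic tree and summation over it -/

/-- The finite dyadic tree below `(j,k)` of depth `N`. -/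
def treeF (N : ℕ) (j k : ℤ) : Finset (ℤ × ℤ) :=
  (Finset.range N).biUnion fun n =>
    (Finset.Ico (k * 2^n) ((k+1) * 2^n)).image fun m => (j + (n:ℤ), m)

lemma treeF_sum (f : ℤ → ℤ → ℝ) (N : ℕ) (j k : ℤ) :
    ∑ p ∈ treeF N j k, f p.1 p.2
      = ∑ n ∈ Finset.range N, ∑ m ∈ Finset.Ico (k * 2^n) ((k+1) * 2^n), f (j + (n:ℤ)) m := by
  unfold treeF
  rw [Finset.sum_biUnion]
  · refine Finset.sum_congr rfl fun n _ => ?_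
    rw [Finset.sum_image (fun a _ b _ h => by simpa using (Prod.mk.injEq _ _ _ _ ▸ h).2)]
  · intro a _ b _ hab
    simp only [Finset.disjoint_left, Finset.mem_image]
    rintro p ⟨m, _, rfl⟩ ⟨m', _, h⟩
    apply hab
    have := (Prod.mk.injEq _ _ _ _ ▸ h).1
    omega

lemma Ico_int_singleton (k : ℤ) : Finset.Ico k (k+1) = {k} := by
  ext m; simp [Int.lt_add_one_iff, le_antisymm_iff, and_comm]

lemma treeF_sum_succ (f : ℤ → ℤ → ℝ) (N : ℕ) (j k : ℤ) :
    ∑ p ∈ treeF (N+1) j k, f p.1 p.2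
      = f j k + ∑ p ∈ treeF N (j+1) (2*k), f p.1 p.2
          + ∑ p ∈ treeF N (j+1) (2*k+1), f p.1 p.2 := by
  rw [treeF_sum, treeF_sum, treeF_sum, Finset.sum_range_succ']
  have h0 : ∑ m ∈ Finset.Ico (k * 2^(0:ℕ)) ((k+1) * 2^(0:ℕ)), f (j + ((0:ℕ):ℤ)) m = f j k := by
    norm_num [Ico_int_singleton k]
  rw [h0]
  have hsplit : ∀ n : ℕ,
      ∑ m ∈ Finset.Ico (k * 2^(n+1)) ((k+1) * 2^(n+1)), f (j + ((n+1:ℕ):ℤ)) m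
        = (∑ m ∈ Finset.Ico ((2*k) * 2^n) ((2*k+1) * 2^n), f ((j+1) + (n:ℤ)) m)
          + ∑ m ∈ Finset.Ico ((2*k+1) * 2^n) ((2*k+1+1) * 2^n), f ((j+1) + (n:ℤ)) m := by
    intro n
    have hj : j + ((n+1:ℕ):ℤ) = (j+1) + (n:ℤ) := by push_cast; ring
    have h1 : k * 2^(n+1) = (2*k) * 2^n := by ring
    have h2 : (k+1) * 2^(n+1) = (2*k+1+1) * 2^n := by ring
    have hp : (0:ℤ) ≤ 2^n := by positivity
    rw [hj, h1, h2, ← Finset.sum_union (Finset.Ico_disjoint_Ico_consecutive _ _ _),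
      Finset.Ico_union_Ico_eq_Ico (by nlinarith) (by nlinarith)]
  simp_rw [hsplit]
  rw [Finset.sum_add_distrib]
  ring

lemma tree_bound {α : ℝ} (hα0 : 0 < α) (hα : α ≤ 1/4) (w : ℝ → ℝ)
    (hw : IsWeight1 w) (hw' : IsWeight1 (fun x => (w x)⁻¹)) :
    ∀ (N : ℕ) (j k : ℤ),
      (α/64) * ∑ p ∈ treeF N j k, muSeq w α p.1 p.2 ≤ bSeq w α j k := by
  intro N
  induction N with
  | zero =>
    intro j k
    simp only [treeF, Finset.range_zero, Finset.biUnion_empty, Finset.sum_empty, mul_zero]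
    exact bSeq_nonneg w hw hw' α j k
  | succ N ih =>
    intro j k
    rw [treeF_sum_succ (muSeq w α) N j k]
    have h1 := ih (j+1) (2*k)
    have h2 := ih (j+1) (2*k+1)
    have hb := bellman_step hα0 hα w hw hw' j k
    linarith

lemma mem_treeF {N : ℕ} {j k j' k' : ℤ} (n : ℕ) (hn : n < N) (h1 : j' = j + (n:ℤ))
    (h2 : k * 2^n ≤ k') (h3 : k' < (k+1) * 2^n) : (j', k') ∈ treeF N j k := by
  unfold treeF
  rw [Finset.mem_biUnion]
  exact ⟨n, Finset.mem_range.2 hn,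
    Finset.mem_image.2 ⟨k', Finset.mem_Ico.2 ⟨h2, h3⟩, by rw [h1]⟩⟩

lemma dyad_sub {j k j' k' : ℤ} (h : dyadInt j' k' ⊆ dyadInt j k) :
    ∃ n : ℕ, j' = j + (n:ℤ) ∧ k * 2^n ≤ k' ∧ k' < (k+1) * 2^n := by
  have hp' := two_zpow_pos (-j')
  have hp := two_zpow_pos (-j)
  have hlt : (k':ℝ) * (2:ℝ)^(-j') < ((k':ℝ)+1) * (2:ℝ)^(-j') := by nlinarith
  obtain ⟨hlow, hhigh⟩ := (Set.Ico_subset_Ico_iff hlt).1 h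
  have hlen : (2:ℝ)^(-j') ≤ (2:ℝ)^(-j) := by nlinarith
  have hj : j ≤ j' := by
    have := (zpow_le_zpow_iff_right₀ (by norm_num : (1:ℝ) < 2)).1 hlen
    omega
  have h2 : (2:ℝ)^(-j) = (2:ℝ)^((j'-j).toNat) * (2:ℝ)^(-j') := by
    rw [← zpow_natCast (2:ℝ) (j'-j).toNat, ← zpow_add₀ (by norm_num : (2:ℝ) ≠ 0)]
    congr 1
    omega
  refine ⟨(j' - j).toNat, by omega, ?_, ?_⟩
  · have hreal : (k:ℝ) * 2^((j'-j).toNat) ≤ (k':ℝ) := by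
      rw [h2] at hlow
      nlinarith
    exact_mod_cast hreal
  · have hreal : (k':ℝ) + 1 ≤ ((k:ℝ)+1) * 2^((j'-j).toNat) := by
      rw [h2] at hhigh
      nlinarith
    have : (k':ℤ) + 1 ≤ (k+1) * 2^((j'-j).toNat) := by exact_mod_cast hreal
    omega

/-! ### A₂ bounds -/

lemma avg_mul_le (w : ℝ → ℝ) (hw : IsWeight1 w) (hw' : IsWeight1 (fun x => (w x)⁻¹))
    (hA2 : dA2Const w < ⊤) (j k : ℤ) :
    iAvg (dyadInt j k) w * iAvg (dyadInt j k) (fun x => (w x)⁻¹) ≤ (dA2Const w).toReal := by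
  have hle : ENNReal.ofReal
      (iAvg (dyadInt j k) w * iAvg (dyadInt j k) (fun x => (w x)⁻¹)) ≤ dA2Const w :=
    le_iSup (fun p : ℤ × ℤ => ENNReal.ofReal
      (iAvg (dyadInt p.1 p.2) w * iAvg (dyadInt p.1 p.2) (fun x => (w x)⁻¹))) (j, k)
  have hnn : 0 ≤ iAvg (dyadInt j k) w * iAvg (dyadInt j k) (fun x => (w x)⁻¹) :=
    (mul_pos (iAvg_pos w hw j k) (iAvg_pos _ hw' j k)).le
  calc iAvg (dyadInt j k) w * iAvg (dyadInt j k) (fun x => (w x)⁻¹)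
      = (ENNReal.ofReal (iAvg (dyadInt j k) w
          * iAvg (dyadInt j k) (fun x => (w x)⁻¹))).toReal := (ENNReal.toReal_ofReal hnn).symm
    _ ≤ (dA2Const w).toReal := ENNReal.toReal_mono hA2.ne hle

/-! ### The α-Lemma -/

/-- **the α-Lemma.** If `w ∈ A₂` (dyadic) and `α > 0`, then there is a
constant `C_α`, depending only on `α`, such that `{μ_I}_{I∈D}` is a Carleson sequence with
intensity at most `C_α [w]_{A₂}^α`: for all `J ∈ D`,
`∑_{I ∈ D(J)} μ_I ≤ C_α [w]_{A₂}^α |J|`. -/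
theorem alpha_lemma (α : ℝ) (hα : 0 < α) :
    ∃ Cα : ℝ, 0 < Cα ∧
      ∀ w : ℝ → ℝ, IsWeight1 w → IsWeight1 (fun x => (w x)⁻¹) → dA2Const w < ⊤ →
        ∀ j k : ℤ,
          ∑' q : {p : ℤ × ℤ // dyadInt p.1 p.2 ⊆ dyadInt j k},
              ENNReal.ofReal (muSeq w α q.1.1 q.1.2)
            ≤ ENNReal.ofReal Cα * dA2Const w ^ α * volume (dyadInt j k) := by
  set α' := min α (1/4) with hα'def
  have hα'0 : 0 < α' := lt_min hα (by norm_num)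
  have hα'4 : α' ≤ 1/4 := min_le_right _ _
  have hα'α : α' ≤ α := min_le_left _ _
  refine ⟨64/α', by positivity, ?_⟩
  intro w hw hw' hA2 j k
  have hQtop : dA2Const w ≠ ⊤ := hA2.ne
  set Qr := (dA2Const w).toReal with hQr_def
  have havgle : ∀ j' k' : ℤ,
      iAvg (dyadInt j' k') w * iAvg (dyadInt j' k') (fun x => (w x)⁻¹) ≤ Qr :=
    fun j' k' => avg_mul_le w hw hw' hA2 j' k'
  have hQrpos : 0 < Qr :=
    lt_of_lt_of_le (mul_pos (iAvg_pos w hw j k) (iAvg_pos _ hw' j k)) (havgle j k)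
  -- per-term reduction from exponent α to α'
  have hterm : ∀ j' k' : ℤ, muSeq w α j' k' ≤ Qr^(α-α') * muSeq w α' j' k' := by
    intro j' k'
    have hu := iAvg_pos w hw j' k'
    have hv := iAvg_pos _ hw' j' k'
    have hu2 : iAvg (dyadInt j' k') w ^ α
        = iAvg (dyadInt j' k') w ^ (α-α') * iAvg (dyadInt j' k') w ^ α' := by
      rw [← Real.rpow_add hu, sub_add_cancel]
    have hv2 : iAvg (dyadInt j' k') (fun x => (w x)⁻¹) ^ α
        = iAvg (dyadInt j' k') (fun x => (w x)⁻¹) ^ (α-α')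
          * iAvg (dyadInt j' k') (fun x => (w x)⁻¹) ^ α' := by
      rw [← Real.rpow_add hv, sub_add_cancel]
    have hfact : muSeq w α j' k'
        = (iAvg (dyadInt j' k') w * iAvg (dyadInt j' k') (fun x => (w x)⁻¹))^(α-α')
          * muSeq w α' j' k' := by
      unfold muSeq
      rw [hu2, hv2, Real.mul_rpow hu.le hv.le]
      ring
    rw [hfact]
    apply mul_le_mul_of_nonneg_right _ (mu_nonneg w hw hw' α' j' k')
    exact Real.rpow_le_rpow (mul_pos hu hv).le (havgle j' k') (by linarith)
  rw [ENNReal.tsum_eq_iSup_sum]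
  refine iSup_le fun S => ?_
  set N := 1 + S.sup (fun q => (q.1.1 - j).toNat) with hN_def
  have hsubF : S.image Subtype.val ⊆ treeF N j k := by
    intro p hp
    simp only [Finset.mem_image] at hp
    obtain ⟨q, hq, rfl⟩ := hp
    obtain ⟨n, hn1, hn2, hn3⟩ := dyad_sub q.2
    refine mem_treeF n ?_ hn1 hn2 hn3
    have hsup : (q.1.1 - j).toNat ≤ S.sup (fun q => (q.1.1 - j).toNat) :=
      Finset.le_sup (f := fun q : {p : ℤ × ℤ // dyadInt p.1 p.2 ⊆ dyadInt j k} =>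
        (q.1.1 - j).toNat) hq
    omega
  have hsum1 : ∑ q ∈ S, muSeq w α' q.1.1 q.1.2
      ≤ ∑ p ∈ treeF N j k, muSeq w α' p.1 p.2 := by
    have himg : ∑ p ∈ S.image Subtype.val, muSeq w α' p.1 p.2
        = ∑ q ∈ S, muSeq w α' q.1.1 q.1.2 :=
      Finset.sum_image (fun a _ b _ h => Subtype.ext h)
    rw [← himg]
    exact Finset.sum_le_sum_of_subset_of_nonneg hsubF
      (fun p _ _ => mu_nonneg w hw hw' α' p.1 p.2)
  have htree := tree_bound hα'0 hα'4 w hw hw' N j k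
  set L := (volume (dyadInt j k)).toReal with hL_def
  have hL0 : 0 ≤ L := ENNReal.toReal_nonneg
  have hbB : bSeq w α' j k ≤ L * Qr^α' := by
    unfold bSeq
    rw [← hL_def]
    apply mul_le_mul_of_nonneg_left _ hL0
    rw [← Real.mul_rpow (iAvg_pos w hw j k).le (iAvg_pos _ hw' j k).le]
    exact Real.rpow_le_rpow (mul_pos (iAvg_pos w hw j k) (iAvg_pos _ hw' j k)).le
      (havgle j k) hα'0.le
  have hrpow_nn : (0:ℝ) ≤ Qr^(α-α') := Real.rpow_nonneg hQrpos.le _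
  have hreal : ∑ q ∈ S, muSeq w α q.1.1 q.1.2 ≤ (64/α') * Qr^α * L := by
    have c1 : ∑ q ∈ S, muSeq w α q.1.1 q.1.2
        ≤ Qr^(α-α') * ∑ q ∈ S, muSeq w α' q.1.1 q.1.2 := by
      rw [Finset.mul_sum]
      exact Finset.sum_le_sum fun q _ => hterm q.1.1 q.1.2
    have c2 : ∑ q ∈ S, muSeq w α' q.1.1 q.1.2 ≤ (64/α') * (L * Qr^α') := by
      have h64 : ∑ p ∈ treeF N j k, muSeq w α' p.1 p.2 ≤ (64/α') * bSeq w α' j k := by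
        rw [div_mul_eq_mul_div, le_div_iff₀ hα'0]
        linarith [htree]
      calc ∑ q ∈ S, muSeq w α' q.1.1 q.1.2
          ≤ ∑ p ∈ treeF N j k, muSeq w α' p.1 p.2 := hsum1
        _ ≤ (64/α') * bSeq w α' j k := h64
        _ ≤ (64/α') * (L * Qr^α') := by
            apply mul_le_mul_of_nonneg_left hbB (by positivity)
    have c3 : Qr^(α-α') * ((64/α') * (L * Qr^α')) = (64/α') * Qr^α * L := by
      have : Qr^(α-α') * Qr^α' = Qr^α := by
        rw [← Real.rpow_add hQrpos, sub_add_cancel]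
      calc Qr^(α-α') * ((64/α') * (L * Qr^α'))
          = (64/α') * (Qr^(α-α') * Qr^α') * L := by ring
        _ = (64/α') * Qr^α * L := by rw [this]
    calc ∑ q ∈ S, muSeq w α q.1.1 q.1.2
        ≤ Qr^(α-α') * ∑ q ∈ S, muSeq w α' q.1.1 q.1.2 := c1
      _ ≤ Qr^(α-α') * ((64/α') * (L * Qr^α')) := by
          apply mul_le_mul_of_nonneg_left c2 hrpow_nn
      _ = (64/α') * Qr^α * L := c3
  calc ∑ q ∈ S, ENNReal.ofReal (muSeq w α q.1.1 q.1.2)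
      = ENNReal.ofReal (∑ q ∈ S, muSeq w α q.1.1 q.1.2) :=
        (ENNReal.ofReal_sum_of_nonneg fun q _ => mu_nonneg w hw hw' α q.1.1 q.1.2).symm
    _ ≤ ENNReal.ofReal ((64/α') * Qr^α * L) := ENNReal.ofReal_le_ofReal hreal
    _ = ENNReal.ofReal (64/α') * ENNReal.ofReal (Qr^α) * ENNReal.ofReal L := by
        rw [ENNReal.ofReal_mul (by positivity), ENNReal.ofReal_mul (by positivity)]
    _ = ENNReal.ofReal (64/α') * dA2Const w ^ α * volume (dyadInt j k) := by
        congr 1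
        · congr 1
          rw [hQr_def, ENNReal.toReal_rpow]
          exact ENNReal.ofReal_toReal (ENNReal.rpow_ne_top_of_nonneg hα.le hQtop)
        · rw [hL_def]
          exact ENNReal.ofReal_toReal (by rw [dyad_volume]; exact ENNReal.ofReal_ne_top)

end
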